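/- With notation as above, for all real $x$: $H_{a,\theta}(ix)\geq \frac{1}{11\sqrt{\theta+1}}\exp\left(\frac{a|x|}{2\sqrt{\theta+1}}\right)$. -/

import Mathlib

open MeasureTheory Set

/-- The bump function `σ_θ(t) = exp(-θ/(1-t²))` on `(-1,1)`, extended by `0`. -/
noncomputable def sigmaTheta (θ t : ℝ) : ℝ :=
  if t ∈ Set.Ioo (-1:ℝ) 1 then Real.exp (-θ / (1 - t^2)) else 0

/-- Normalizing constant `C_θ = (∫_{-1}^1 σ_θ)⁻¹`. -/
noncomputable def Ctheta (θ : ℝ) : ℝ := (∫ t in Ioo (-1:ℝ) 1, sigmaTheta θ t)⁻¹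

/-- The multiplier `H_{a,θ}(z) = C_θ ∫_{-1}^1 σ_θ(t) e^{-iatz} dt`. -/
noncomputable def Hmult (a θ : ℝ) (z : ℂ) : ℂ :=
  (Ctheta θ : ℂ) * ∫ t in Ioo (-1:ℝ) 1, (sigmaTheta θ t : ℂ) *
    Complex.exp (-Complex.I * a * t * z)

lemma sigma_nonneg (θ t : ℝ) : 0 ≤ sigmaTheta θ t := by
  unfold sigmaTheta; split <;> positivity

lemma sigma_even (θ t : ℝ) : sigmaTheta θ (-t) = sigmaTheta θ t := by
  unfold sigmaTheta
  have : (-t ∈ Ioo (-1:ℝ) 1) ↔ (t ∈ Ioo (-1:ℝ) 1) := by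
    simp [mem_Ioo, neg_lt, lt_neg, and_comm]
  simp [this, neg_sq]

lemma sigma_meas (θ : ℝ) : Measurable (sigmaTheta θ) := by
  unfold sigmaTheta
  apply Measurable.ite measurableSet_Ioo _ measurable_const
  fun_prop

lemma sigma_le (θ t : ℝ) (hθ : 0 ≤ θ) : sigmaTheta θ t ≤ Real.exp (-θ) := by
  unfold sigmaTheta
  split
  · rename_i h
    apply Real.exp_le_exp.2
    have h1 : 0 < 1 - t^2 := by nlinarith [h.1, h.2]
    have h2 : 1 - t^2 ≤ 1 := by nlinarith [sq_nonneg t]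
    rw [neg_div, neg_le_neg_iff, le_div_iff₀ h1]
    nlinarith
  · positivity

lemma integrable_g (a θ x : ℝ) (hθ : 0 ≤ θ) :
    IntegrableOn (fun t => sigmaTheta θ t * Real.exp (a * t * x)) (Ioo (-1:ℝ) 1) := by
  apply Measure.integrableOn_of_bounded (M := Real.exp (-θ) * Real.exp (|a * x|))
  · simp [Real.volume_Ioo]
  · exact ((sigma_meas θ).mul (by fun_prop)).aestronglyMeasurable
  · filter_upwards [ae_restrict_mem measurableSet_Ioo] with t ht
    rw [Real.norm_eq_abs, abs_mul, abs_of_nonneg (sigma_nonneg θ t),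
      abs_of_nonneg (Real.exp_pos _).le]
    apply mul_le_mul (sigma_le θ t hθ) _ (Real.exp_pos _).le (Real.exp_pos _).le
    apply Real.exp_le_exp.2
    calc a * t * x ≤ |a * t * x| := le_abs_self _
      _ = |a * x| * |t| := by rw [abs_mul, abs_mul, abs_mul]; ring
      _ ≤ |a * x| * 1 := by
          apply mul_le_mul_of_nonneg_left _ (abs_nonneg _)
          rw [abs_le]; exact ⟨ht.1.le, ht.2.le⟩
      _ = |a * x| := mul_one _

lemma Nlb (a θ x : ℝ) (ha : 0 ≤ a) (hθ : 0 < θ) (hx : 0 ≤ x) :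
    (1 / (2 * Real.sqrt (θ + 1))) * (Real.exp (-(θ + 1)) *
      Real.exp (a * (1 / (2 * Real.sqrt (θ + 1))) * x)) ≤
      ∫ t in Ioo (-1:ℝ) 1, sigmaTheta θ t * Real.exp (a * t * x) := by
  set s := Real.sqrt (θ + 1) with hs
  have hssq : s ^ 2 = θ + 1 := Real.sq_sqrt (by linarith)
  have hs1 : 1 < s := by nlinarith [Real.sqrt_nonneg (θ + 1)]
  have hs0 : 0 < s := by linarith
  set c := 1 / (2 * s) with hc
  have hc0 : 0 < c := by positivity
  have h2c : 2 * c = 1 / s := by rw [hc]; field_simp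
  have hmem : ∀ t ∈ Icc c (2 * c), t ∈ Ioo (-1:ℝ) 1 := by
    intro t ht
    have h2c1 : 2 * c < 1 := by rw [h2c, div_lt_one hs0]; exact hs1
    exact ⟨by linarith [ht.1], by linarith [ht.2]⟩
  have hσlb : ∀ t ∈ Icc c (2 * c), Real.exp (-(θ + 1)) ≤ sigmaTheta θ t := by
    intro t ht
    unfold sigmaTheta
    rw [if_pos (hmem t ht)]
    apply Real.exp_le_exp.2
    have ht2 : t ^ 2 ≤ 1 / (θ + 1) := by
      have h1 : t ≤ 2 * c := ht.2
      have h2 : 0 ≤ t := le_trans hc0.le ht.1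
      have h3 : (2 * c) ^ 2 = 1 / (θ + 1) := by
        rw [h2c, div_pow, one_pow, hssq]
      nlinarith
    have e1 : θ / (θ + 1) = 1 - 1 / (θ + 1) := by field_simp; ring
    have h1 : θ / (θ + 1) ≤ 1 - t ^ 2 := by rw [e1]; linarith
    have h0 : 0 < 1 - t ^ 2 := lt_of_lt_of_le (by positivity) h1
    rw [neg_div, neg_le_neg_iff, div_le_iff₀ h0]
    have e2 : θ / (θ + 1) * (θ + 1) = θ := by field_simp
    nlinarith [mul_le_mul_of_nonneg_right h1 (by linarith : (0:ℝ) ≤ θ + 1)]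
  have hsub : Icc c (2 * c) ⊆ Ioo (-1:ℝ) 1 := hmem
  have h1 : Real.exp (-(θ + 1)) * Real.exp (a * c * x) * (volume (Icc c (2*c))).toReal
      ≤ ∫ t in Icc c (2*c), sigmaTheta θ t * Real.exp (a * t * x) := by
    apply setIntegral_ge_of_const_le_real measurableSet_Icc (by simp)
    · intro t ht
      apply mul_le_mul (hσlb t ht) _ (Real.exp_pos _).le (sigma_nonneg θ t)
      apply Real.exp_le_exp.2
      nlinarith [mul_nonneg (mul_nonneg ha hx) (sub_nonneg.2 ht.1)]
    · exact (integrable_g a θ x hθ.le).mono_set hsub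
  have h2 : (volume (Icc c (2*c))).toReal = c := by
    rw [Real.volume_Icc, ENNReal.toReal_ofReal (by linarith)]
    ring
  rw [h2] at h1
  calc c * (Real.exp (-(θ + 1)) * Real.exp (a * c * x))
      = Real.exp (-(θ + 1)) * Real.exp (a * c * x) * c := by ring
    _ ≤ ∫ t in Icc c (2*c), sigmaTheta θ t * Real.exp (a * t * x) := h1
    _ ≤ _ := by
        apply setIntegral_mono_set (integrable_g a θ x hθ.le)
        · filter_upwards with t
          exact mul_nonneg (sigma_nonneg θ t) (Real.exp_pos _).le
        · exact HasSubset.Subset.eventuallyLE hsub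

lemma core (a θ x : ℝ) (ha : 0 < a) (hθ : 0 < θ) (hx : 0 ≤ x) :
    Real.exp (a * x / (2 * Real.sqrt (θ + 1))) / (11 * Real.sqrt (θ + 1)) ≤
      Ctheta θ * ∫ t in Ioo (-1:ℝ) 1, sigmaTheta θ t * Real.exp (a * t * x) := by
  rw [Ctheta]
  set s := Real.sqrt (θ + 1) with hs
  have hssq : s ^ 2 = θ + 1 := Real.sq_sqrt (by linarith)
  have hs1 : 1 < s := by nlinarith [Real.sqrt_nonneg (θ + 1)]
  have hs0 : 0 < s := by linarith
  set c := 1 / (2 * s) with hc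
  have hc0 : 0 < c := by positivity
  set E := Real.exp (a * x / (2 * s)) with hE
  have hE0 : 0 < E := Real.exp_pos _
  set N := ∫ t in Ioo (-1:ℝ) 1, sigmaTheta θ t * Real.exp (a * t * x) with hN
  set D := ∫ t in Ioo (-1:ℝ) 1, sigmaTheta θ t with hD
  have hacx : a * c * x = a * x / (2 * s) := by rw [hc]; ring
  have hNlb : c * (Real.exp (-(θ + 1)) * E) ≤ N := by
    have := Nlb a θ x ha.le hθ hx
    rwa [← hs, ← hc, hacx, ← hE, ← hN] at this
  have hDint : IntegrableOn (sigmaTheta θ) (Ioo (-1:ℝ) 1) := by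
    have := integrable_g a θ 0 hθ.le
    simpa using this
  have hDlb : c * (Real.exp (-(θ + 1)) * 1) ≤ D := by
    have := Nlb a θ 0 ha.le hθ le_rfl
    simpa [← hs, ← hc, ← hD] using this
  have hD0 : 0 < D := lt_of_lt_of_le (by positivity) hDlb
  have hDub : D ≤ 2 * Real.exp (-θ) := by
    calc D ≤ ∫ _t in Ioo (-1:ℝ) 1, Real.exp (-θ) := by
            apply setIntegral_mono_on hDint (by simp) measurableSet_Ioo
            intro t _
            exact sigma_le θ t hθ.le
      _ = 2 * Real.exp (-θ) := by
            rw [setIntegral_const, Real.volume_real_Ioo_of_le (by norm_num), smul_eq_mul]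
            ring
  have hDinv : (2 * Real.exp (-θ))⁻¹ ≤ D⁻¹ := inv_anti₀ hD0 hDub
  have hN0 : 0 ≤ c * (Real.exp (-(θ + 1)) * E) := by positivity
  have hexp : Real.exp (-(θ + 1)) = Real.exp (-1) * Real.exp (-θ) := by
    rw [← Real.exp_add]; ring_nf
  have hinv : (4:ℝ)/11 ≤ Real.exp (-1) := by
    have he : Real.exp 1 < 2.75 := lt_trans Real.exp_one_lt_d9 (by norm_num)
    have h2 : (2.75:ℝ)⁻¹ ≤ (Real.exp 1)⁻¹ := inv_anti₀ (Real.exp_pos 1) he.le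
    rw [Real.exp_neg]
    calc (4:ℝ)/11 ≤ (2.75:ℝ)⁻¹ := by norm_num
      _ ≤ _ := h2
  calc E / (11 * s) = (4/11) * (E / (4 * s)) := by field_simp
    _ ≤ Real.exp (-1) * (E / (4 * s)) :=
        mul_le_mul_of_nonneg_right hinv (by positivity)
    _ = (2 * Real.exp (-θ))⁻¹ * (c * (Real.exp (-(θ + 1)) * E)) := by
        rw [hexp, hc]
        have h1 : Real.exp (-θ) ≠ 0 := (Real.exp_pos _).ne'
        field_simp
        ring
    _ ≤ D⁻¹ * N :=
        mul_le_mul hDinv hNlb hN0 (inv_nonneg.2 hD0.le)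

lemma Hre (a θ x : ℝ) : (Hmult a θ (Complex.I * x)).re =
    Ctheta θ * ∫ t in Ioo (-1:ℝ) 1, sigmaTheta θ t * Real.exp (a * t * x) := by
  unfold Hmult
  have key : ∀ t : ℝ, (sigmaTheta θ t : ℂ) *
      Complex.exp (-Complex.I * a * t * (Complex.I * x)) =
      ((sigmaTheta θ t * Real.exp (a * t * x) : ℝ) : ℂ) := by
    intro t
    have h1 : (-Complex.I * a * t * (Complex.I * x)) = ((a * t * x : ℝ) : ℂ) := by
      have : (-Complex.I * a * t * (Complex.I * x)) =
          (-(Complex.I * Complex.I)) * ((a : ℂ) * t * x) := by ring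
      rw [this, Complex.I_mul_I, neg_neg, one_mul]
      push_cast
      ring
    rw [h1, ← Complex.ofReal_exp]
    push_cast
    ring
  simp_rw [key]
  have h2 : (∫ t in Ioo (-1:ℝ) 1, ((sigmaTheta θ t * Real.exp (a * t * x) : ℝ) : ℂ))
      = ((∫ t in Ioo (-1:ℝ) 1, sigmaTheta θ t * Real.exp (a * t * x) : ℝ) : ℂ) :=
    integral_ofReal
  rw [h2, ← Complex.ofReal_mul, Complex.ofReal_re]

lemma Nsymm (a θ x : ℝ) :
    ∫ t in Ioo (-1:ℝ) 1, sigmaTheta θ t * Real.exp (a * t * x) =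
    ∫ t in Ioo (-1:ℝ) 1, sigmaTheta θ t * Real.exp (a * t * (-x)) := by
  have h1 : ∀ (g : ℝ → ℝ), ∫ t in Ioo (-1:ℝ) 1, g t = ∫ t in (-1:ℝ)..1, g t := by
    intro g
    rw [intervalIntegral.integral_of_le (by norm_num), integral_Ioc_eq_integral_Ioo]
  rw [h1, h1]
  have h2 : (fun t => sigmaTheta θ t * Real.exp (a * t * (-x))) =
      fun t => (fun u => sigmaTheta θ u * Real.exp (a * u * x)) (-t) := by
    funext t
    simp only
    rw [sigma_even]
    ring_nf
  rw [h2, intervalIntegral.integral_comp_neg (fun u => sigmaTheta θ u * Real.exp (a * u * x))]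
  norm_num

theorem stmt14 (a θ : ℝ) (ha : 0 < a) (hθ : 0 < θ) :
    ∀ x : ℝ,
      Real.exp (a * |x| / (2 * Real.sqrt (θ + 1))) / (11 * Real.sqrt (θ + 1)) ≤
        (Hmult a θ (Complex.I * x)).re := by
  intro x
  rw [Hre a θ x]
  rcases le_total 0 x with hx | hx
  · rw [abs_of_nonneg hx]
    exact core a θ x ha hθ hx
  · rw [abs_of_nonpos hx]
    have := core a θ (-x) ha hθ (by linarith)
    rwa [Nsymm a θ (-x), neg_neg] at this
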